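/- Let G be a finite group of exponent 4 in which all elements of order 4 have the same square, a central involution z. If S is a locally maximal product-free set in G that does not fill G, then z ∈ S and every element of S is an involution. -/

import Mathlib

open Pointwise

/-- `S` is product-free if `S ∩ SS = ∅`. -/
def ProductFree {G : Type*} [Group G] (S : Set G) : Prop :=
  Disjoint S (S * S)

/-- `S` is locally maximal product-free if it is product-free and not properly
contained in any product-free set. -/
def LocallyMaximalPF {G : Type*} [Group G] (S : Set G) : Prop :=
  ProductFree S ∧ ∀ T : Set G, ProductFree T → S ⊆ T → S = T

/-- `S` fills `G` (is complete) if every non-identity element lies in `S ∪ SS`. -/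
def Fills {G : Type*} [Group G] (S : Set G) : Prop :=
  ∀ g : G, g ≠ 1 → g ∈ S ∪ S * S

/-- `G` is filled if every locally maximal product-free set fills `G`. -/
def Filled (G : Type*) [Group G] : Prop :=
  ∀ S : Set G, LocallyMaximalPF S → Fills S

theorem exponent_four_involutions {G : Type*} [Group G] [Finite G]
    (hexp : Monoid.exponent G = 4) (z : G) (hz : z ∈ Subgroup.center G)
    (hz2 : orderOf z = 2) (hsq : ∀ g : G, orderOf g = 4 → g ^ 2 = z)
    (S : Set G) (hS : LocallyMaximalPF S) (hnf : ¬ Fills S) :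
    z ∈ S ∧ ∀ a ∈ S, orderOf a = 2 := by
  have hPF : Disjoint S (S * S) := hS.1
  have disj : ∀ x ∈ S, x ∈ S * S → False := fun x hx hxx =>
    Set.disjoint_left.mp hPF hx hxx
  have hone : (1 : G) ∉ S := by
    intro h1
    exact disj 1 h1 ⟨1, h1, 1, h1, mul_one 1⟩
  have hzz : z * z = 1 := by
    have h := pow_orderOf_eq_one z
    rw [hz2, pow_two] at h
    exact h
  have hzc : ∀ x : G, x * z = z * x := fun x => Subgroup.mem_center_iff.mp hz x
  have hsq2 : ∀ x : G, x * x = 1 ∨ x * x = z := by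
    intro x
    have hdvd : orderOf x ∣ 4 := hexp ▸ Monoid.order_dvd_exponent x
    have hpos : 0 < orderOf x := orderOf_pos x
    have hle : orderOf x ≤ 4 := Nat.le_of_dvd (by norm_num) hdvd
    have hcases : orderOf x = 1 ∨ orderOf x = 2 ∨ orderOf x = 3 ∨ orderOf x = 4 := by omega
    rcases hcases with h | h | h | h
    · left
      rw [orderOf_eq_one_iff.mp h, one_mul]
    · left
      have h2 := pow_orderOf_eq_one x
      rw [h, pow_two] at h2
      exact h2
    · exfalso
      rw [h] at hdvd
      norm_num at hdvd
    · right
      have h2 := hsq x h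
      rw [pow_two] at h2
      exact h2
  -- from local maximality: adding any nontrivial h ∉ S breaks product-freeness
  have key : ∀ h : G, h ∉ S → h ≠ 1 → h * h ∉ S →
      h ∈ S * S ∨ (∃ q ∈ S, ∃ x ∈ S, h * q = x) ∨ (∃ p ∈ S, ∃ x ∈ S, p * h = x) := by
    intro h hhS hh1 hhhS
    have hT : ¬ Disjoint (S ∪ {h}) ((S ∪ {h}) * (S ∪ {h})) := by
      intro hd
      have heq : S = S ∪ {h} := hS.2 (S ∪ {h}) hd Set.subset_union_left
      exact hhS (heq ▸ Set.mem_union_right S rfl)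
    obtain ⟨x, hxT, hxP⟩ := Set.not_disjoint_iff.mp hT
    rw [Set.mem_mul] at hxP
    obtain ⟨p, hpT, q, hqT, hpq⟩ := hxP
    rcases hpT with hp | hp <;> rcases hqT with hq | hq <;> rcases hxT with hx | hx
    · exact (disj x hx ⟨p, hp, q, hq, hpq⟩).elim
    · rw [Set.mem_singleton_iff] at hx
      subst hx
      exact Or.inl ⟨p, hp, q, hq, hpq⟩
    · rw [Set.mem_singleton_iff] at hq
      subst hq
      exact Or.inr (Or.inr ⟨p, hp, x, hx, hpq⟩)
    · rw [Set.mem_singleton_iff] at hq hx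
      subst hq
      rw [hx] at hpq
      have hp1 : p = 1 := mul_eq_right.mp hpq
      rw [hp1] at hp
      exact absurd hp hone
    · rw [Set.mem_singleton_iff] at hp
      subst hp
      exact Or.inr (Or.inl ⟨q, hq, x, hx, hpq⟩)
    · rw [Set.mem_singleton_iff] at hp hx
      subst hp
      rw [hx] at hpq
      have hq1 : q = 1 := mul_eq_left.mp hpq
      rw [hq1] at hq
      exact absurd hq hone
    · rw [Set.mem_singleton_iff] at hp hq
      subst hp; subst hq
      exact absurd (hpq ▸ hx) hhhS
    · rw [Set.mem_singleton_iff] at hp hq hx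
      subst hp; subst hq
      rw [hx] at hpq
      exact absurd (mul_eq_right.mp hpq) (hx ▸ hh1)
  -- extract the non-filled element g
  have hnf' : ∃ g : G, g ≠ 1 ∧ g ∉ S ∪ S * S := by
    by_contra hcon
    push_neg at hcon
    exact hnf fun g hg => hcon g hg
  obtain ⟨g, hg1, hgT⟩ := hnf'
  have hgS : g ∉ S := fun h => hgT (Or.inl h)
  have hgSS : g ∉ S * S := fun h => hgT (Or.inr h)
  -- main claim : z ∈ S
  have hzS : z ∈ S := by
    by_contra hznS
    have main : ∀ s ∈ S, s * s = z → s * z ∉ S → False := by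
      intro s hsS hss hszS
      have hsz1 : s * z ≠ 1 := by
        intro h
        have hs_eq : s = z := by
          have h2 := mul_eq_one_iff_eq_inv.mp h
          rw [inv_eq_of_mul_eq_one_right hzz] at h2
          exact h2
        exact hznS (hs_eq ▸ hsS)
      have hszsz : (s * z) * (s * z) = z := by
        calc (s * z) * (s * z) = s * (z * s) * z := by group
        _ = s * (s * z) * z := by rw [← hzc s]
        _ = ((s * s) * z) * z := by rw [← mul_assoc s s z]
        _ = z := by rw [hss, hzz, one_mul]
      have hszsznS : (s * z) * (s * z) ∉ S := by rw [hszsz]; exact hznS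
      have hszSS : (s * z) ∈ S * S := by
        rcases key (s * z) hszS hsz1 hszsznS with h | ⟨q, hq, x, hx, hqx⟩ | ⟨p, hp, x, hx, hpx⟩
        · exact h
        · rcases hsq2 q with h1 | h1
          · have e : x * q = s * z := by
              rw [← hqx, mul_assoc, h1, mul_one]
            exact ⟨x, hx, q, hq, e⟩
          · have e : x * q = s := by
              rw [← hqx, mul_assoc, h1, mul_assoc, hzz, mul_one]
            exact (disj s hsS ⟨x, hx, q, hq, e⟩).elim
        · rcases hsq2 p with h1 | h1
          · have e : p * x = s * z := by
              rw [← hpx, ← mul_assoc, h1, one_mul]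
            exact ⟨p, hp, x, hx, e⟩
          · have e : p * x = s := by
              rw [← hpx, ← mul_assoc, h1, ← mul_assoc, ← hzc s, mul_assoc, hzz, mul_one]
            exact (disj s hsS ⟨p, hp, x, hx, e⟩).elim
      obtain ⟨c, hc, d, hd, hcd0⟩ := hszSS
      have hcd : c * d = s * z := hcd0
      rcases hsq2 d with hd1 | hd1
      · rcases hsq2 c with hc1 | hc1
        · -- c*c = 1, d*d = 1 ⟹ s = d*c ∈ S*S
          have h1 : (d * c) * (c * d) = 1 := by
            rw [mul_assoc d c (c * d), ← mul_assoc c c d, hc1, one_mul, hd1]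
          have h2 : (c * d)⁻¹ = s := by
            rw [hcd]
            exact inv_eq_of_mul_eq_one_left (by rw [← mul_assoc, hss, hzz])
          have e : d * c = s := (eq_inv_of_mul_eq_one_left h1).trans h2
          exact disj s hsS ⟨d, hd, c, hc, e⟩
        · -- c*c = z ⟹ d = c*s ∈ S*S
          have h1 : (c * c) * d = (c * s) * z := by
            rw [mul_assoc, hcd, ← mul_assoc]
          rw [hc1] at h1
          rw [hzc (c * s)] at h1
          have e : c * s = d := (mul_left_cancel h1).symm
          exact disj d hd ⟨c, hc, s, hsS, e⟩
      · -- d*d = z ⟹ c = s*d ∈ S*S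
        have h1 : c * z = (s * d) * z := by
          calc c * z = c * (d * d) := by rw [hd1]
          _ = (c * d) * d := by rw [mul_assoc]
          _ = (s * z) * d := by rw [hcd]
          _ = s * (z * d) := by rw [mul_assoc]
          _ = s * (d * z) := by rw [hzc d]
          _ = (s * d) * z := by rw [mul_assoc]
        have e : s * d = c := (mul_right_cancel h1).symm
        exact disj c hc ⟨s, hsS, d, hd, e⟩
    -- g*g ∉ S
    have hggnS : g * g ∉ S := by
      rcases hsq2 g with h | h <;> rw [h]
      · exact hone
      · exact hznS
    rcases key g hgS hg1 hggnS with h | ⟨q, hq, x, hx, hqx⟩ | ⟨p, hp, x, hx, hpx⟩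
    · exact hgSS h
    · rcases hsq2 q with h1 | h1
      · have e : x * q = g := by
          rw [← hqx, mul_assoc, h1, mul_one]
        exact hgSS ⟨x, hx, q, hq, e⟩
      · refine main q hq h1 ?_
        intro hqz
        have e : x * (q * z) = g := by
          rw [← hqx, mul_assoc, ← mul_assoc q q z, h1, hzz, mul_one]
        exact hgSS ⟨x, hx, q * z, hqz, e⟩
    · rcases hsq2 p with h1 | h1
      · have e : p * x = g := by
          rw [← hpx, ← mul_assoc, h1, one_mul]
        exact hgSS ⟨p, hp, x, hx, e⟩
      · refine main p hp h1 ?_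
        intro hpz
        have h2 : (p * z) * p = 1 := by
          rw [mul_assoc, ← hzc p, ← mul_assoc, h1, hzz]
        have e : (p * z) * x = g := by
          rw [← hpx, ← mul_assoc, h2, one_mul]
        exact hgSS ⟨p * z, hpz, x, hx, e⟩
  refine ⟨hzS, fun a haS => ?_⟩
  have ha1 : a ≠ 1 := fun h => hone (h ▸ haS)
  rcases hsq2 a with h | h
  · have h2 : a ^ 2 = 1 := by rw [pow_two]; exact h
    exact orderOf_eq_prime h2 ha1
  · exact (disj z hzS ⟨a, haS, a, haS, h⟩).elim
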